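/- Let A be a quasi-cocommutative topologically free K[[ℏ]]-bialgebra, i.e. (Δ − Δ^op)(A) ⊆ ℏ A⊗A. Then A₀ = A/ℏA equipped with the cobracket δ(x) := ((Δ − Δ^op)/ℏ mod ℏ) is a co-Poisson bialgebra: δ is antisymmetric, satisfies the co-Jacobi identity, the co-Leibniz compatibility (Δ⊗id)∘δ = ((123)+(213))∘(id⊗δ)∘Δ, and δ(ab) = δ(a)Δ(b) + Δ(a)δ(b). -/

import Mathlib

set_option maxHeartbeats 1000000
set_option synthInstance.maxHeartbeats 400000
set_option linter.unusedSectionVars false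

open TensorProduct

noncomputable section

variable (K : Type*) [Field K] [CharZero K]
variable (A : Type*) [Ring A] [Bialgebra (PowerSeries K) A]

/-- The flip of `A ⊗ A`. -/
def tau : A ⊗[PowerSeries K] A →ₗ[PowerSeries K] A ⊗[PowerSeries K] A :=
  (TensorProduct.comm (PowerSeries K) A A).toLinearMap

/-- The permutation (213) of `A ⊗ A ⊗ A` (swap of the first two factors). -/
def s12 : A ⊗[PowerSeries K] (A ⊗[PowerSeries K] A) →ₗ[PowerSeries K]
    A ⊗[PowerSeries K] (A ⊗[PowerSeries K] A) :=
  (TensorProduct.assoc (PowerSeries K) A A A).toLinearMap ∘ₗ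
    (TensorProduct.map (TensorProduct.comm (PowerSeries K) A A).toLinearMap LinearMap.id) ∘ₗ
      (TensorProduct.assoc (PowerSeries K) A A A).symm.toLinearMap

/-- The swap of the last two factors of `A ⊗ A ⊗ A`. -/
def s23 : A ⊗[PowerSeries K] (A ⊗[PowerSeries K] A) →ₗ[PowerSeries K]
    A ⊗[PowerSeries K] (A ⊗[PowerSeries K] A) :=
  TensorProduct.map LinearMap.id (TensorProduct.comm (PowerSeries K) A A).toLinearMap

/-- `Δ ⊗ id`. -/
def D1 : A ⊗[PowerSeries K] A →ₗ[PowerSeries K] A ⊗[PowerSeries K] (A ⊗[PowerSeries K] A) :=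
  (TensorProduct.assoc (PowerSeries K) A A A).toLinearMap ∘ₗ
    TensorProduct.map Coalgebra.comul LinearMap.id

/-- A torsion-free module over a PID is flat. -/
theorem flat_of_tf {R M : Type*} [CommRing R] [IsDomain R] [IsPrincipalIdealRing R]
    [AddCommGroup M] [Module R M]
    (htf : ∀ (r : R) (m : M), r ≠ 0 → r • m = 0 → m = 0) : Module.Flat R M := by
  rw [Module.Flat.iff_rTensor_injective']
  intro I
  obtain ⟨f, rfl⟩ : ∃ f, I = Ideal.span {f} := Submodule.IsPrincipal.principal I
  by_cases hf0 : f = 0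
  · subst hf0
    intro u v _
    have hz : ∀ w : (Ideal.span {(0:R)} : Ideal R) ⊗[R] M, w = 0 := by
      intro w
      induction w using TensorProduct.induction_on with
      | zero => rfl
      | tmul x m =>
        have hx0 : (x : R) = 0 := by
          have h2 := x.2
          exact zero_dvd_iff.mp (Ideal.mem_span_singleton.mp h2)
        have : x = 0 := Subtype.ext hx0
        rw [this, zero_tmul]
      | add a b ha hb => rw [ha, hb, add_zero]
    rw [hz u, hz v]
  · set e := LinearEquiv.toSpanNonzeroSingleton R R f hf0 with he
    have hcomp : (Ideal.span {f}).subtype ∘ₗ e.toLinearMap = LinearMap.toSpanSingleton R R f := by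
      ext
      simp only [he, LinearMap.coe_comp, Function.comp_apply, LinearEquiv.coe_coe,
        Submodule.coe_subtype, LinearMap.toSpanSingleton_apply, one_smul]
      exact one_smul R f
    have hinj1 : Function.Injective (LinearMap.rTensor M (LinearMap.toSpanSingleton R R f)) := by
      intro u v h
      have key : ∀ w : R ⊗[R] M,
          TensorProduct.lid R M (LinearMap.rTensor M (LinearMap.toSpanSingleton R R f) w) =
            f • TensorProduct.lid R M w := by
        intro w
        induction w using TensorProduct.induction_on with
        | zero => simp
        | tmul r m => simp [smul_smul, mul_comm]
        | add a b ha hb => simp only [map_add, ha, hb, smul_add]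
      have h2 : f • (TensorProduct.lid R M u - TensorProduct.lid R M v) = 0 := by
        rw [smul_sub, ← key, ← key, h, sub_self]
      exact (TensorProduct.lid R M).injective (sub_eq_zero.mp (htf f _ hf0 h2))
    have hsurj : Function.Surjective (LinearMap.rTensor M e.toLinearMap) :=
      LinearMap.rTensor_surjective M e.surjective
    intro u v h
    obtain ⟨u', rfl⟩ := hsurj u
    obtain ⟨v', rfl⟩ := hsurj v
    have h' : LinearMap.rTensor M (LinearMap.toSpanSingleton R R f) u' =
        LinearMap.rTensor M (LinearMap.toSpanSingleton R R f) v' := by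
      rw [← hcomp, LinearMap.rTensor_comp]
      exact h
    rw [hinj1 h']

/-- X-torsion-freeness upgrades to full torsion-freeness over `K⟦X⟧`. -/
theorem tf_all {M : Type*} [AddCommGroup M] [Module (PowerSeries K) M]
    (htf : ∀ m : M, (PowerSeries.X : PowerSeries K) • m = 0 → m = 0) :
    ∀ (r : PowerSeries K) (m : M), r ≠ 0 → r • m = 0 → m = 0 := by
  have hpow : ∀ (n : ℕ) (m : M), ((PowerSeries.X : PowerSeries K) ^ n) • m = 0 → m = 0 := by
    intro n
    induction n with
    | zero => intro m h; simpa using h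
    | succ k ih =>
      intro m h
      rw [pow_succ', mul_smul] at h
      exact ih _ (htf _ h)
  intro r m hr h
  obtain ⟨n, u, rfl⟩ := IsDiscreteValuationRing.eq_unit_mul_pow_irreducible hr
    PowerSeries.X_irreducible
  rw [mul_smul] at h
  have h2 : ((u⁻¹ : (PowerSeries K)ˣ) : PowerSeries K) • ((u : PowerSeries K) •
      ((PowerSeries.X : PowerSeries K) ^ n • m)) = 0 := by rw [h, smul_zero]
  rw [smul_smul, ← Units.val_mul, inv_mul_cancel, Units.val_one, one_smul] at h2
  exact hpow n m h2

section helpers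

variable {K A}

lemma tau_tmul (x y : A) : tau K A (x ⊗ₜ y) = y ⊗ₜ x := rfl

lemma s23_tmul (x y z : A) :
    s23 K A (x ⊗ₜ (y ⊗ₜ z)) = x ⊗ₜ (z ⊗ₜ y) := rfl

lemma s12_tmul (x y z : A) :
    s12 K A (x ⊗ₜ (y ⊗ₜ z)) = y ⊗ₜ (x ⊗ₜ z) := by
  simp [s12]

lemma tau_tau (u : A ⊗[PowerSeries K] A) : tau K A (tau K A u) = u := by
  induction u using TensorProduct.induction_on with
  | zero => simp
  | tmul x y => rfl
  | add a b ha hb => simp only [map_add, ha, hb]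

lemma s23_s23 (u : A ⊗[PowerSeries K] (A ⊗[PowerSeries K] A)) :
    s23 K A (s23 K A u) = u := by
  induction u using TensorProduct.induction_on with
  | zero => simp
  | add a b ha hb => simp only [map_add, ha, hb]
  | tmul x v =>
    induction v using TensorProduct.induction_on with
    | zero => simp [tmul_zero]
    | add a b ha hb => simp only [tmul_add, map_add, ha, hb]
    | tmul y z => simp [s23_tmul]

lemma s12_s12 (u : A ⊗[PowerSeries K] (A ⊗[PowerSeries K] A)) :
    s12 K A (s12 K A u) = u := by
  induction u using TensorProduct.induction_on with
  | zero => simp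
  | add a b ha hb => simp only [map_add, ha, hb]
  | tmul x v =>
    induction v using TensorProduct.induction_on with
    | zero => simp [tmul_zero]
    | add a b ha hb => simp only [tmul_add, map_add, ha, hb]
    | tmul y z => simp [s12_tmul]

lemma braid (u : A ⊗[PowerSeries K] (A ⊗[PowerSeries K] A)) :
    s12 K A (s23 K A (s12 K A u)) = s23 K A (s12 K A (s23 K A u)) := by
  induction u using TensorProduct.induction_on with
  | zero => simp
  | add a b ha hb => simp only [map_add, ha, hb]
  | tmul x v =>
    induction v using TensorProduct.induction_on with
    | zero => simp [tmul_zero]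
    | add a b ha hb => simp only [tmul_add, map_add, ha, hb]
    | tmul y z => simp [s12_tmul, s23_tmul]

lemma H1 (v : A ⊗[PowerSeries K] A) (x : A) :
    TensorProduct.assoc (PowerSeries K) A A A (v ⊗ₜ x) = s23 K A (s12 K A (x ⊗ₜ v)) := by
  induction v using TensorProduct.induction_on with
  | zero => simp [tmul_zero]
  | add a b ha hb => simp only [add_tmul, tmul_add, map_add, ha, hb]
  | tmul y z => simp [s12_tmul, s23_tmul]

lemma H2 (v : A ⊗[PowerSeries K] A) (y : A) :
    TensorProduct.assoc (PowerSeries K) A A A ((tau K A v) ⊗ₜ y) =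
      s12 K A (TensorProduct.assoc (PowerSeries K) A A A (v ⊗ₜ y)) := by
  induction v using TensorProduct.induction_on with
  | zero => simp [tmul_zero]
  | add a b ha hb => simp only [map_add, add_tmul, ha, hb]
  | tmul p q => simp [tau_tmul, s12_tmul]

lemma H3 (x : A) (v : A ⊗[PowerSeries K] A) :
    x ⊗ₜ[PowerSeries K] (tau K A v) = s23 K A (x ⊗ₜ v) := by
  induction v using TensorProduct.induction_on with
  | zero => simp [tmul_zero]
  | add a b ha hb => simp only [map_add, tmul_add, ha, hb]
  | tmul p q => simp [tau_tmul, s23_tmul]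

lemma tau_mul (u v : A ⊗[PowerSeries K] A) : tau K A (u * v) = tau K A u * tau K A v := by
  induction u using TensorProduct.induction_on with
  | zero => simp
  | add a b ha hb => simp only [add_mul, map_add, ha, hb]
  | tmul x y =>
    induction v using TensorProduct.induction_on with
    | zero => simp
    | add a b ha hb => simp only [mul_add, map_add, ha, hb]
    | tmul p q => simp [Algebra.TensorProduct.tmul_mul_tmul, tau_tmul]

end helpers

theorem stmt7
    (htf : ∀ a : A, (PowerSeries.X : PowerSeries K) • a = 0 → a = 0)
    (δ : A →ₗ[PowerSeries K] A ⊗[PowerSeries K] A)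
    (hδ : ∀ a : A, (PowerSeries.X : PowerSeries K) • δ a =
      Coalgebra.comul a - tau K A (Coalgebra.comul a)) :
    -- antisymmetry mod ℏ
    (∀ a : A, ∃ z, δ a + tau K A (δ a) = (PowerSeries.X : PowerSeries K) • z) ∧
    -- co-Jacobi mod ℏ : ((123)+(231)+(312)) ∘ (δ⊗id) ∘ δ = 0
    (∀ a : A, ∃ z,
      (((TensorProduct.assoc (PowerSeries K) A A A).toLinearMap ∘ₗ
          TensorProduct.map δ LinearMap.id) (δ a)) +
        (s12 K A) ((s23 K A) (((TensorProduct.assoc (PowerSeries K) A A A).toLinearMap ∘ₗ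
          TensorProduct.map δ LinearMap.id) (δ a))) +
        (s23 K A) ((s12 K A) (((TensorProduct.assoc (PowerSeries K) A A A).toLinearMap ∘ₗ
          TensorProduct.map δ LinearMap.id) (δ a))) = (PowerSeries.X : PowerSeries K) • z) ∧
    -- compatibility (Δ⊗id)∘δ = ((123)+(213))∘(id⊗δ)∘Δ mod ℏ
    (∀ a : A, ∃ z,
      D1 K A (δ a) -
        ((TensorProduct.map LinearMap.id δ) (Coalgebra.comul a) +
          (s12 K A) ((TensorProduct.map LinearMap.id δ) (Coalgebra.comul a))) =
        (PowerSeries.X : PowerSeries K) • z) ∧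
    -- derivation property mod ℏ
    (∀ a b : A, ∃ z,
      δ (a * b) - (δ a * Coalgebra.comul b + Coalgebra.comul a * δ b) =
        (PowerSeries.X : PowerSeries K) • z) := by
  classical
  -- torsion-freeness and flatness infrastructure
  have htfA : ∀ (r : PowerSeries K) (m : A), r ≠ 0 → r • m = 0 → m = 0 := tf_all K htf
  haveI hflat : Module.Flat (PowerSeries K) A := flat_of_tf htfA
  have hregA : IsSMulRegular A (PowerSeries.X : PowerSeries K) :=
    IsSMulRegular.of_right_eq_zero_of_smul htf
  have hreg2 : IsSMulRegular (A ⊗[PowerSeries K] A) (PowerSeries.X : PowerSeries K) :=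
    hregA.lTensor A
  have hreg3 : IsSMulRegular (A ⊗[PowerSeries K] (A ⊗[PowerSeries K] A))
      (PowerSeries.X : PowerSeries K) := hreg2.lTensor A
  have hinj2 : ∀ u : A ⊗[PowerSeries K] A, (PowerSeries.X : PowerSeries K) • u = 0 → u = 0 := by
    intro u h
    exact hreg2 (show _ • u = _ • (0 : A ⊗[PowerSeries K] A) by rw [h, smul_zero])
  have hinj3 : ∀ u : A ⊗[PowerSeries K] (A ⊗[PowerSeries K] A),
      (PowerSeries.X : PowerSeries K) • u = 0 → u = 0 := by
    intro u h
    exact hreg3 (show _ • u = _ • (0 : A ⊗[PowerSeries K] (A ⊗[PowerSeries K] A)) by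
      rw [h, smul_zero])
  -- key pointwise computations
  have ℓ1 : ∀ u : A ⊗[PowerSeries K] A,
      (PowerSeries.X : PowerSeries K) •
          (TensorProduct.assoc (PowerSeries K) A A A (TensorProduct.map δ LinearMap.id u)) =
        TensorProduct.assoc (PowerSeries K) A A A
            (TensorProduct.map Coalgebra.comul LinearMap.id u) -
          s12 K A (TensorProduct.assoc (PowerSeries K) A A A
            (TensorProduct.map Coalgebra.comul LinearMap.id u)) := by
    intro u
    induction u using TensorProduct.induction_on with
    | zero => simp
    | add a b ha hb => simp only [map_add, smul_add, ha, hb]; abel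
    | tmul x y =>
      simp only [map_tmul, LinearMap.id_coe, id_eq]
      rw [show (PowerSeries.X : PowerSeries K) •
            (TensorProduct.assoc (PowerSeries K) A A A) ((δ x) ⊗ₜ[PowerSeries K] y) =
          (TensorProduct.assoc (PowerSeries K) A A A)
            (((PowerSeries.X : PowerSeries K) • δ x) ⊗ₜ[PowerSeries K] y) by
          rw [← smul_tmul', map_smul]]
      rw [hδ x, sub_tmul, map_sub, H2]
  have ℓ4 : ∀ u : A ⊗[PowerSeries K] A,
      (PowerSeries.X : PowerSeries K) • (TensorProduct.map LinearMap.id δ u) =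
        TensorProduct.map LinearMap.id Coalgebra.comul u -
          s23 K A (TensorProduct.map LinearMap.id Coalgebra.comul u) := by
    intro u
    induction u using TensorProduct.induction_on with
    | zero => simp
    | add a b ha hb => simp only [map_add, smul_add, ha, hb]; abel
    | tmul x y =>
      simp only [map_tmul, LinearMap.id_coe, id_eq]
      rw [show (PowerSeries.X : PowerSeries K) • (x ⊗ₜ[PowerSeries K] (δ y)) =
          x ⊗ₜ[PowerSeries K] ((PowerSeries.X : PowerSeries K) • δ y) from
          (tmul_smul _ x (δ y)).symm]
      rw [hδ y, tmul_sub, H3]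
  have ℓ3 : ∀ u : A ⊗[PowerSeries K] A,
      TensorProduct.assoc (PowerSeries K) A A A
          (TensorProduct.map Coalgebra.comul LinearMap.id (tau K A u)) =
        s23 K A (s12 K A (TensorProduct.map LinearMap.id Coalgebra.comul u)) := by
    intro u
    induction u using TensorProduct.induction_on with
    | zero => simp
    | add a b ha hb => simp only [map_add, ha, hb]
    | tmul x y =>
      rw [tau_tmul]
      simp only [map_tmul, LinearMap.id_coe, id_eq]
      rw [H1]
  have ℓ6 : ∀ u : A ⊗[PowerSeries K] A,
      TensorProduct.map LinearMap.id Coalgebra.comul (tau K A u) =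
        s12 K A (s23 K A (TensorProduct.assoc (PowerSeries K) A A A
          (TensorProduct.map Coalgebra.comul LinearMap.id u))) := by
    intro u
    induction u using TensorProduct.induction_on with
    | zero => simp
    | add a b ha hb => simp only [map_add, ha, hb]
    | tmul x y =>
      rw [tau_tmul]
      simp only [map_tmul, LinearMap.id_coe, id_eq]
      rw [H1, s23_s23, s12_s12]
  have hcoassoc : ∀ a : A,
      TensorProduct.assoc (PowerSeries K) A A A (TensorProduct.map Coalgebra.comul LinearMap.id
        (Coalgebra.comul a)) =
      TensorProduct.map LinearMap.id Coalgebra.comul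
        (Coalgebra.comul (R := PowerSeries K) a) := by
    intro a
    exact Coalgebra.coassoc_apply (R := PowerSeries K) (A := A) a
  refine ⟨?_, ?_, ?_, ?_⟩
  · -- antisymmetry
    intro a
    refine ⟨0, ?_⟩
    rw [smul_zero]
    apply hinj2
    rw [show (PowerSeries.X : PowerSeries K) • (δ a + tau K A (δ a)) =
        ((PowerSeries.X : PowerSeries K) • δ a) +
          tau K A ((PowerSeries.X : PowerSeries K) • δ a) by simp only [smul_add, map_smul]]
    rw [hδ a, map_sub, tau_tau]
    abel
  · -- co-Jacobi
    intro a
    refine ⟨0, ?_⟩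
    rw [smul_zero]
    simp only [LinearMap.comp_apply, LinearEquiv.coe_coe]
    apply hinj3
    apply hinj3
    have e1 : (PowerSeries.X : PowerSeries K) •
        (TensorProduct.assoc (PowerSeries K) A A A (TensorProduct.map δ LinearMap.id (δ a))) =
        TensorProduct.assoc (PowerSeries K) A A A
            (TensorProduct.map δ LinearMap.id (Coalgebra.comul a)) -
          TensorProduct.assoc (PowerSeries K) A A A
            (TensorProduct.map δ LinearMap.id (tau K A (Coalgebra.comul a))) := by
      rw [show (PowerSeries.X : PowerSeries K) •
          (TensorProduct.assoc (PowerSeries K) A A A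
            (TensorProduct.map δ LinearMap.id (δ a))) =
          TensorProduct.assoc (PowerSeries K) A A A
            (TensorProduct.map δ LinearMap.id ((PowerSeries.X : PowerSeries K) • δ a)) by
        simp only [map_smul]]
      rw [hδ a, map_sub, map_sub]
    have step : (PowerSeries.X : PowerSeries K) • ((PowerSeries.X : PowerSeries K) •
        (TensorProduct.assoc (PowerSeries K) A A A (TensorProduct.map δ LinearMap.id (δ a)))) =
        TensorProduct.map LinearMap.id Coalgebra.comul (Coalgebra.comul a) -
          s12 K A (TensorProduct.map LinearMap.id Coalgebra.comul (Coalgebra.comul a)) -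
          s23 K A (s12 K A (TensorProduct.map LinearMap.id Coalgebra.comul (Coalgebra.comul a))) +
          s12 K A (s23 K A (s12 K A
            (TensorProduct.map LinearMap.id Coalgebra.comul (Coalgebra.comul a)))) := by
      rw [e1, smul_sub, ℓ1, ℓ1, ℓ3, hcoassoc]
      abel
    rw [show (PowerSeries.X : PowerSeries K) • ((PowerSeries.X : PowerSeries K) •
        ((TensorProduct.assoc (PowerSeries K) A A A (TensorProduct.map δ LinearMap.id (δ a))) +
          s12 K A (s23 K A (TensorProduct.assoc (PowerSeries K) A A A
            (TensorProduct.map δ LinearMap.id (δ a)))) +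
          s23 K A (s12 K A (TensorProduct.assoc (PowerSeries K) A A A
            (TensorProduct.map δ LinearMap.id (δ a)))))) =
        (PowerSeries.X : PowerSeries K) • ((PowerSeries.X : PowerSeries K) •
          (TensorProduct.assoc (PowerSeries K) A A A
            (TensorProduct.map δ LinearMap.id (δ a)))) +
        s12 K A (s23 K A ((PowerSeries.X : PowerSeries K) • ((PowerSeries.X : PowerSeries K) •
          (TensorProduct.assoc (PowerSeries K) A A A
            (TensorProduct.map δ LinearMap.id (δ a)))))) +
        s23 K A (s12 K A ((PowerSeries.X : PowerSeries K) • ((PowerSeries.X : PowerSeries K) •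
          (TensorProduct.assoc (PowerSeries K) A A A
            (TensorProduct.map δ LinearMap.id (δ a)))))) by
      simp only [smul_add, map_smul]]
    rw [step]
    simp only [map_add, map_sub, s12_s12, s23_s23, braid]
    abel
  · -- compatibility
    intro a
    refine ⟨-(s12 K A (TensorProduct.map LinearMap.id δ (δ a))), ?_⟩
    rw [← sub_eq_zero]
    apply hinj3
    have hD1 : (PowerSeries.X : PowerSeries K) • D1 K A (δ a) =
        TensorProduct.map LinearMap.id Coalgebra.comul (Coalgebra.comul a) -
          s23 K A (s12 K A
            (TensorProduct.map LinearMap.id Coalgebra.comul (Coalgebra.comul a))) := by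
      rw [show (PowerSeries.X : PowerSeries K) • D1 K A (δ a) =
          TensorProduct.assoc (PowerSeries K) A A A
            (TensorProduct.map Coalgebra.comul LinearMap.id
              ((PowerSeries.X : PowerSeries K) • δ a)) by
        simp only [D1, LinearMap.comp_apply, LinearEquiv.coe_coe, map_smul]]
      rw [hδ a, map_sub, map_sub, ℓ3, hcoassoc]
    have hQt : (PowerSeries.X : PowerSeries K) • ((PowerSeries.X : PowerSeries K) •
        s12 K A (TensorProduct.map LinearMap.id δ (δ a))) =
        s12 K A (TensorProduct.map LinearMap.id Coalgebra.comul (Coalgebra.comul a)) -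
          s12 K A (s23 K A
            (TensorProduct.map LinearMap.id Coalgebra.comul (Coalgebra.comul a))) -
          s23 K A (TensorProduct.map LinearMap.id Coalgebra.comul (Coalgebra.comul a)) +
          s23 K A (s12 K A
            (TensorProduct.map LinearMap.id Coalgebra.comul (Coalgebra.comul a))) := by
      have e1 : (PowerSeries.X : PowerSeries K) •
          s12 K A (TensorProduct.map LinearMap.id δ (δ a)) =
          s12 K A (TensorProduct.map LinearMap.id δ (Coalgebra.comul a)) -
            s12 K A (TensorProduct.map LinearMap.id δ (tau K A (Coalgebra.comul a))) := by
        rw [show (PowerSeries.X : PowerSeries K) •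
            s12 K A (TensorProduct.map LinearMap.id δ (δ a)) =
            s12 K A (TensorProduct.map LinearMap.id δ
              ((PowerSeries.X : PowerSeries K) • δ a)) by simp only [map_smul]]
        rw [hδ a, map_sub, map_sub]
      rw [e1, smul_sub]
      rw [show (PowerSeries.X : PowerSeries K) •
          s12 K A (TensorProduct.map LinearMap.id δ (Coalgebra.comul a)) =
          s12 K A ((PowerSeries.X : PowerSeries K) •
            TensorProduct.map LinearMap.id δ (Coalgebra.comul a)) by simp only [map_smul]]
      rw [show (PowerSeries.X : PowerSeries K) •
          s12 K A (TensorProduct.map LinearMap.id δ (tau K A (Coalgebra.comul a))) =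
          s12 K A ((PowerSeries.X : PowerSeries K) •
            TensorProduct.map LinearMap.id δ (tau K A (Coalgebra.comul a))) by
        simp only [map_smul]]
      rw [ℓ4, ℓ4, ℓ6, hcoassoc]
      simp only [map_sub, s12_s12, s23_s23, braid]
      abel
    rw [show (PowerSeries.X : PowerSeries K) • (D1 K A (δ a) -
        ((TensorProduct.map LinearMap.id δ) (Coalgebra.comul a) +
          (s12 K A) ((TensorProduct.map LinearMap.id δ) (Coalgebra.comul a))) -
        (PowerSeries.X : PowerSeries K) •
          (-(s12 K A (TensorProduct.map LinearMap.id δ (δ a))))) =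
        (PowerSeries.X : PowerSeries K) • D1 K A (δ a) -
        ((PowerSeries.X : PowerSeries K) •
            (TensorProduct.map LinearMap.id δ) (Coalgebra.comul a) +
          s12 K A ((PowerSeries.X : PowerSeries K) •
            (TensorProduct.map LinearMap.id δ) (Coalgebra.comul a))) +
        (PowerSeries.X : PowerSeries K) • ((PowerSeries.X : PowerSeries K) •
          s12 K A (TensorProduct.map LinearMap.id δ (δ a))) by
      simp only [smul_sub, smul_add, smul_neg, map_smul]
      abel]
    rw [hD1, ℓ4, hQt]
    simp only [map_sub, s12_s12, s23_s23, braid]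
    abel
  · -- derivation property
    intro a b
    refine ⟨-(δ a * δ b), ?_⟩
    rw [← sub_eq_zero]
    apply hinj2
    rw [show (PowerSeries.X : PowerSeries K) •
        (δ (a * b) - (δ a * Coalgebra.comul b + Coalgebra.comul a * δ b) -
          (PowerSeries.X : PowerSeries K) • (-(δ a * δ b))) =
        (PowerSeries.X : PowerSeries K) • δ (a * b) -
          (((PowerSeries.X : PowerSeries K) • δ a) * Coalgebra.comul b +
            Coalgebra.comul a * ((PowerSeries.X : PowerSeries K) • δ b)) +
          ((PowerSeries.X : PowerSeries K) • δ a) * ((PowerSeries.X : PowerSeries K) • δ b) by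
      simp only [smul_sub, smul_add, smul_neg, sub_neg_eq_add, smul_mul_assoc, mul_smul_comm,
        smul_smul]]
    rw [hδ (a * b), hδ a, hδ b, Bialgebra.comul_mul, tau_mul]
    simp only [sub_mul, mul_sub]
    abel

end
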